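/- arXiv:0808.2588 — 2 statements merged into one kernel-verified Lean document; each statement's English description precedes it below -/
import Mathlib

section
/- Let p be a prime number, G a finite group, and r a natural number. Let M be a module over the group ring ℤ_p[G] such that M is a free ℤ_p-module of rank r·|G|. If M can be generated by r elements x₁, …, x_r as a ℤ_p[G]-module, then x₁, …, x_r form a ℤ_p[G]-basis of M; in particular, M is a free ℤ_p[G]-module of rank r. -/
/-- Let `p` be a prime, `G` a finite group and `r : ℕ`. Let `M` be a
module over the group ring `ℤ_p[G]` which, viewed as a `ℤ_p`-module via restriction of
scalars, is free of rank `r * |G|`.  If `M` is generated over `ℤ_p[G]` by `r` elements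
`x 0, …, x (r-1)`, then these elements form a `ℤ_p[G]`-basis of `M`; in particular `M` is
a free `ℤ_p[G]`-module of rank `r`. -/
theorem stickelberger_group_ring_free
    (p : ℕ) [Fact p.Prime] (G : Type*) [Group G] [Fintype G] (r : ℕ)
    (M : Type*) [AddCommGroup M] [Module (MonoidAlgebra ℤ_[p] G) M]
    [Module ℤ_[p] M] [IsScalarTower ℤ_[p] (MonoidAlgebra ℤ_[p] G) M]
    (hfree : Nonempty (Module.Basis (Fin (r * Fintype.card G)) ℤ_[p] M))
    (x : Fin r → M)
    (hgen : Submodule.span (MonoidAlgebra ℤ_[p] G) (Set.range x) = ⊤) :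
    ∃ b : Module.Basis (Fin r) (MonoidAlgebra ℤ_[p] G) M, ∀ i : Fin r, b i = x i := by
  classical
  set R := MonoidAlgebra ℤ_[p] G with hR
  obtain ⟨bM⟩ := hfree
  -- the canonical surjection from `Fin r →₀ R`
  set φ : (Fin r →₀ R) →ₗ[R] M := Finsupp.linearCombination R x with hφ
  have hsurj : Function.Surjective φ := by
    rw [← LinearMap.range_eq_top, hφ, Finsupp.range_linearCombination, hgen]
  -- a `ℤ_[p]`-basis of `Fin r →₀ R`
  have bR : Module.Basis G ℤ_[p] R := MonoidAlgebra.basis G ℤ_[p]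
  have bP : Module.Basis ((_ : Fin r) × G) ℤ_[p] (Fin r →₀ R) := Finsupp.basis fun _ => bR
  have hcard : Fintype.card ((_ : Fin r) × G) = r * Fintype.card G := by
    simp [Fintype.card_sigma]
  -- the `ℤ_[p]`-linear equivalence `M ≃ (Fin r →₀ R)`
  let e : M ≃ₗ[ℤ_[p]] (Fin r →₀ R) :=
    (bP.equiv bM (Fintype.equivFinOfCardEq hcard)).symm
  -- the surjective `ℤ_[p]`-endomorphism of `M`
  let f : M →ₗ[ℤ_[p]] M := (φ.restrictScalars ℤ_[p]) ∘ₗ e.toLinearMap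
  have hfs : Function.Surjective f := hsurj.comp e.surjective
  haveI : Module.Finite ℤ_[p] M := Module.Finite.of_basis bM
  have hfi : Function.Injective f :=
    OrzechProperty.injective_of_surjective_endomorphism f hfs
  have hφi : Function.Injective φ := by
    intro a b hab
    have : f (e.symm a) = f (e.symm b) := by
      simp only [f, LinearMap.comp_apply, LinearEquiv.coe_toLinearMap,
        LinearEquiv.apply_symm_apply, LinearMap.coe_restrictScalars, hab]
    simpa using e.symm.injective (hfi this)
  have li : LinearIndependent R x :=
    hφi
  exact ⟨Module.Basis.mk li hgen.ge, fun i => Module.Basis.mk_apply li hgen.ge i⟩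
end

section
/- Let p be a prime number, let k ⊆ L be number fields with L/k a finite Galois extension, and let Δ = Gal(L/k). Let χ : Δ → ℚ_pˣ be a group homomorphism (a ℚ_p-valued character of Δ). Let Δ act on the ℚ_p-algebra L ⊗_ℚ ℚ_p through its action on the first factor. Then the χ-eigenspace {x ∈ L ⊗_ℚ ℚ_p : σ • x = χ(σ) • x for all σ ∈ Δ} has ℚ_p-dimension equal to [k : ℚ]. -/
open Polynomial Module TensorProduct

section TraceTower

variable {R S T : Type*} [Field R] [Field S] [Field T]
  [Algebra R S] [Algebra S T] [Algebra R T] [IsScalarTower R S T]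
  [FiniteDimensional R S] [FiniteDimensional S T]

/-- Trace transitivity for a general `S`-linear endomorphism of `T`. -/
lemma LinearMap.trace_restrictScalars_eq_algebra_trace (f : T →ₗ[S] T) :
    LinearMap.trace R T (f.restrictScalars R) = Algebra.trace R S (LinearMap.trace S T f) := by
  classical
  let b := Module.finBasis R S
  let c := Module.finBasis S T
  rw [LinearMap.trace_eq_matrix_trace R (b.smulTower c),
    LinearMap.trace_eq_matrix_trace S c]
  rw [Matrix.trace, Matrix.trace]
  simp only [Matrix.diag]
  rw [← Finset.univ_product_univ, Finset.sum_product, Finset.sum_comm, map_sum]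
  refine Finset.sum_congr rfl fun j _ => ?_
  rw [Algebra.trace_eq_matrix_trace b, Matrix.trace]
  refine Finset.sum_congr rfl fun i _ => ?_
  rw [Matrix.diag, Algebra.leftMulMatrix_eq_repr_mul, LinearMap.toMatrix_apply,
    LinearMap.toMatrix_apply, Basis.smulTower_apply, LinearMap.restrictScalars_apply,
    map_smul, Basis.smulTower_repr, map_smul, Finsupp.smul_apply, smul_eq_mul, mul_comm]

end TraceTower

set_option maxHeartbeats 1000000 in
set_option synthInstance.maxHeartbeats 400000 in
/-- The trace (over the base field) of a nontrivial automorphism of a finite extension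
is zero. -/
lemma trace_algEquiv_ne_one {K L : Type*} [Field K] [Field L] [Algebra K L]
    [FiniteDimensional K L] (σ : L ≃ₐ[K] L) (hσ : σ ≠ 1) :
    LinearMap.trace K L σ.toLinearMap = 0 := by
  classical
  letI : Fintype (L ≃ₐ[K] L) := AlgEquiv.fintype K L
  let G : Subgroup (L ≃ₐ[K] L) := Subgroup.zpowers σ
  let F : IntermediateField K L := IntermediateField.fixedField G
  set n := orderOf σ with hn
  have hn0 : n ≠ 0 := (orderOf_pos σ).ne'
  have hn1 : n ≠ 1 := fun h => hσ (orderOf_eq_one_iff.mp h)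
  have hfr : Module.finrank F L = n := by
    refine (IntermediateField.finrank_fixedField_eq_card G).trans ?_
    rw [hn]
    exact Nat.card_zpowers σ
  have hfix : ∀ (a : F) (x : L), σ ((a : L) * x) = (a : L) * σ x := by
    intro a x
    rw [map_mul]
    congr 1
    exact a.2 ⟨σ, Subgroup.mem_zpowers σ⟩
  let φ : L →ₗ[F] L :=
    { toFun := σ
      map_add' := map_add σ
      map_smul' := fun a x => hfix a x }
  have hφpow : ∀ (m : ℕ) (x : L), (φ ^ m) x = (σ ^ m) x := by
    intro m
    induction m with
    | zero => intro x; simp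
    | succ m ih =>
      intro x
      rw [pow_succ, pow_succ, Module.End.mul_apply, AlgEquiv.mul_apply, ← ih (σ x)]
      rfl
  have hφn : φ ^ n = 1 := by
    refine LinearMap.ext fun x => ?_
    rw [hφpow, hn, pow_orderOf_eq_one σ]
    rfl
  have hchar : LinearMap.charpoly φ = X ^ n - 1 := by
    have hdegP : (LinearMap.charpoly φ).natDegree = n := by
      rw [LinearMap.charpoly_natDegree, hfr]
    have hmonP : (LinearMap.charpoly φ).Monic := LinearMap.charpoly_monic φ
    have hmonX : (X ^ n - 1 : F[X]).Monic := by
      simpa using monic_X_pow_sub_C (1 : F) hn0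
    have hdegP' : (LinearMap.charpoly φ).degree = (n : ℕ) := by
      rw [Polynomial.degree_eq_natDegree hmonP.ne_zero, hdegP]
    have hdegX : (X ^ n - 1 : F[X]).degree = (n : ℕ) := by
      simpa using degree_X_pow_sub_C (Nat.pos_of_ne_zero hn0) (1 : F)
    by_contra hne
    set q : F[X] := LinearMap.charpoly φ - (X ^ n - 1) with hq
    have hq0 : q ≠ 0 := sub_ne_zero.mpr hne
    have hdq : q.degree < (n : ℕ) := by
      rw [← hdegP']
      exact Polynomial.degree_sub_lt (hdegP'.trans hdegX.symm) hmonP.ne_zero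
        (hmonP.leadingCoeff.trans hmonX.leadingCoeff.symm)
    have hndq : q.natDegree < n := by
      rwa [← Polynomial.natDegree_lt_iff_degree_lt hq0] at hdq
    have haq : Polynomial.aeval φ q = 0 := by
      rw [hq, map_sub, LinearMap.aeval_self_charpoly, map_sub, map_pow, aeval_X, map_one,
        hφn, sub_self, zero_sub, neg_zero]
    have hsum : ∑ i ∈ Finset.range n, q.coeff i • φ ^ i = 0 :=
      (Polynomial.aeval_eq_sum_range' hndq φ).symm.trans haq
    let g : Fin n → (L →* L) := fun i => ((σ ^ (i : ℕ)).toAlgHom.toRingHom.toMonoidHom)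
    have hinj : Function.Injective g := by
      intro i j h
      have h2 : (σ ^ (i : ℕ)) = σ ^ (j : ℕ) :=
        AlgEquiv.ext fun x => DFunLike.congr_fun h x
      exact Fin.ext (pow_injOn_Iio_orderOf (by simpa [hn] using i.2) (by simpa [hn] using j.2) h2)
    have hli := (linearIndependent_monoidHom L L).comp g hinj
    have h0 : ∑ i : Fin n, (algebraMap F L (q.coeff (i : ℕ))) • ((fun f : L →* L => ⇑f) ∘ g) i
        = 0 := by
      funext x
      have hx := DFunLike.congr_fun hsum x
      rw [LinearMap.sum_apply, LinearMap.zero_apply,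
        Finset.sum_range (fun i => (q.coeff i • φ ^ i) x)] at hx
      simp only [Finset.sum_apply, Pi.smul_apply, Pi.zero_apply, smul_eq_mul,
        Function.comp_apply]
      rw [← hx]
      refine Finset.sum_congr rfl fun i _ => ?_
      rw [LinearMap.smul_apply, hφpow, Algebra.smul_def]
      rfl
    have hcoeff : ∀ i : Fin n, algebraMap F L (q.coeff (i : ℕ)) = 0 :=
      Fintype.linearIndependent_iff.mp hli _ h0
    apply hq0
    ext i
    rcases lt_or_ge i n with h | h
    · have := hcoeff ⟨i, h⟩
      simpa using (algebraMap F L).injective (by simpa using this)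
    · simp [Polynomial.coeff_eq_zero_of_natDegree_lt (lt_of_lt_of_le hndq h)]
  have htr : LinearMap.trace F L φ = 0 := by
    haveI : Nonempty (Module.Free.ChooseBasisIndex F L) := by
      rw [← Fintype.card_pos_iff, ← Module.finrank_eq_card_chooseBasisIndex, hfr]
      omega
    rw [LinearMap.trace_eq_matrix_trace F (Module.Free.chooseBasis F L),
      Matrix.trace_eq_neg_charpoly_coeff]
    have hcp : (LinearMap.toMatrix (Module.Free.chooseBasis F L) (Module.Free.chooseBasis F L)
        φ).charpoly = LinearMap.charpoly φ := (LinearMap.charpoly_def φ).symm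
    rw [hcp, hchar, ← Module.finrank_eq_card_chooseBasisIndex, hfr]
    rw [Polynomial.coeff_sub, Polynomial.coeff_X_pow, Polynomial.coeff_one]
    have h1 : n - 1 ≠ n := by omega
    have h2 : n - 1 ≠ 0 := by omega
    simp [h1, h2]
  have hres : σ.toLinearMap = φ.restrictScalars K := LinearMap.ext fun x => rfl
  rw [hres, LinearMap.trace_restrictScalars_eq_algebra_trace, htr, map_zero]

set_option maxHeartbeats 2000000 in
set_option synthInstance.maxHeartbeats 400000 in
/-- Let `p` be a prime, `k ⊆ L` number fields with `L/k` finite Galois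
and `Δ = Gal(L/k)`, and let `χ : Δ → ℚ_pˣ` be a character.  Let `Δ` act on the
`ℚ_p`-algebra `L ⊗_ℚ ℚ_p` through its action on `L` (each `σ ∈ Δ` acting as `σ ⊗ id`,
realized here on `ℚ_p ⊗[ℚ] L` as the base change of the `ℚ`-linear map `σ`).  Then the
`χ`-eigenspace `{x : σ • x = χ σ • x for all σ ∈ Δ}` has `ℚ_p`-dimension `[k : ℚ]`. -/
theorem finrank_chi_eigenspace_tensor_padic
    (p : ℕ) [Fact p.Prime]
    (k L : Type*) [Field k] [Field L] [NumberField k] [NumberField L]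
    [Algebra k L] [FiniteDimensional k L] [IsGalois k L]
    (χ : (L ≃ₐ[k] L) →* ℚ_[p]ˣ) :
    Module.finrank ℚ_[p]
      ↥(⨅ σ : L ≃ₐ[k] L,
          Module.End.eigenspace
            (LinearMap.baseChange ℚ_[p]
              ((σ.toAlgHom.toRingHom.toRatAlgHom : L →ₐ[ℚ] L).toLinearMap))
            ((χ σ : ℚ_[p])))
      = Module.finrank ℚ k := by
  classical
  letI : Fintype (L ≃ₐ[k] L) := AlgEquiv.fintype k L
  set g : (L ≃ₐ[k] L) → (L →ₗ[ℚ] L) :=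
    fun σ => (σ.toAlgHom.toRingHom.toRatAlgHom : L →ₐ[ℚ] L).toLinearMap with hg
  set f : (L ≃ₐ[k] L) → Module.End ℚ_[p] (ℚ_[p] ⊗[ℚ] L) :=
    fun σ => LinearMap.baseChange ℚ_[p] (g σ) with hfdef
  have hf_mul : ∀ σ τ, f σ * f τ = f (σ * τ) := by
    intro σ τ
    have : g (σ * τ) = (g σ).comp (g τ) := LinearMap.ext fun x => rfl
    rw [hfdef]
    simp only [this, LinearMap.baseChange_comp]
    rfl
  have hf_one : f 1 = LinearMap.id := by
    have : g 1 = LinearMap.id := LinearMap.ext fun x => rfl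
    rw [hfdef]
    simp only [this, LinearMap.baseChange_id]
  set N : ℕ := Fintype.card (L ≃ₐ[k] L) with hN
  have hN0 : (N : ℚ_[p]) ≠ 0 := Nat.cast_ne_zero.mpr Fintype.card_pos.ne'
  set c : (L ≃ₐ[k] L) → ℚ_[p] := fun σ => (((χ σ)⁻¹ : ℚ_[p]ˣ) : ℚ_[p]) with hc
  have hcχ : ∀ σ, c σ * (χ σ : ℚ_[p]) = 1 := fun σ => by
    rw [hc, ← Units.val_mul, inv_mul_cancel, Units.val_one]
  set π : Module.End ℚ_[p] (ℚ_[p] ⊗[ℚ] L) := (N : ℚ_[p])⁻¹ • ∑ σ, c σ • f σ with hπ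
  set E := ⨅ σ : L ≃ₐ[k] L, Module.End.eigenspace (f σ) ((χ σ : ℚ_[p])) with hE
  -- π is a projection onto E
  have key : ∀ τ, f τ * π = (χ τ : ℚ_[p]) • π := by
    intro τ
    rw [hπ, mul_smul_comm, Finset.mul_sum]
    simp only [mul_smul_comm, hf_mul]
    rw [smul_comm ((χ τ : ℚ_[p])) ((N : ℚ_[p])⁻¹)]
    congr 1
    rw [Finset.smul_sum]
    refine Fintype.sum_equiv (Equiv.mulLeft τ) _ _ fun σ => ?_
    simp only [Equiv.coe_mulLeft]
    rw [smul_smul]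
    congr 1
    have : c σ = (((χ σ)⁻¹ : ℚ_[p]ˣ) : ℚ_[p]) := rfl
    rw [this, show c (τ * σ) = (((χ (τ * σ))⁻¹ : ℚ_[p]ˣ) : ℚ_[p]) from rfl,
      ← Units.val_mul, map_mul]
    congr 1
    rw [mul_inv, mul_comm ((χ τ)⁻¹) ((χ σ)⁻¹), ← mul_assoc,
      mul_comm (χ τ) ((χ σ)⁻¹), mul_assoc, mul_inv_cancel, mul_one]
  have hproj : LinearMap.IsProj E π := by
    constructor
    · intro x
      rw [hE, Submodule.mem_iInf]
      intro τ
      rw [Module.End.mem_eigenspace_iff]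
      have := DFunLike.congr_fun (key τ) x
      rw [Module.End.mul_apply] at this
      rw [this, LinearMap.smul_apply]
    · intro x hx
      rw [hE, Submodule.mem_iInf] at hx
      have hx' : ∀ σ, f σ x = (χ σ : ℚ_[p]) • x :=
        fun σ => Module.End.mem_eigenspace_iff.mp (hx σ)
      rw [hπ, LinearMap.smul_apply, LinearMap.sum_apply]
      have : ∀ σ ∈ Finset.univ, (c σ • f σ) x = x := by
        intro σ _
        rw [LinearMap.smul_apply, hx', smul_smul, hcχ, one_smul]
      rw [Finset.sum_congr rfl this, Finset.sum_const, Finset.card_univ, ← hN,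
        ← Nat.cast_smul_eq_nsmul ℚ_[p], smul_smul, inv_mul_cancel₀ hN0, one_smul]
  -- compute the trace of π
  haveI : Module.Finite ℚ_[p] (ℚ_[p] ⊗[ℚ] L) := Module.Finite.base_change ℚ ℚ_[p] L
  have htrace : LinearMap.trace ℚ_[p] (ℚ_[p] ⊗[ℚ] L) π = (Module.finrank ℚ k : ℚ_[p]) := by
    rw [hπ, map_smul, map_sum]
    have hterm : ∀ σ ∈ Finset.univ, σ ≠ 1 →
        LinearMap.trace ℚ_[p] (ℚ_[p] ⊗[ℚ] L) (c σ • f σ) = 0 := by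
      intro σ _ hσ1
      rw [map_smul, hfdef]
      have hres : g σ = (AlgEquiv.restrictScalars ℚ σ).toLinearMap := LinearMap.ext fun x => rfl
      have hne : AlgEquiv.restrictScalars ℚ σ ≠ 1 := by
        intro h
        apply hσ1
        ext x
        exact DFunLike.congr_fun h x
      rw [LinearMap.trace_baseChange, hres, trace_algEquiv_ne_one _ hne, map_zero,
        smul_zero]
    rw [Finset.sum_eq_single_of_mem 1 (Finset.mem_univ 1) hterm]
    have hχ1 : c 1 = 1 := by
      have : c 1 = (((χ 1)⁻¹ : ℚ_[p]ˣ) : ℚ_[p]) := rfl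
      rw [this, map_one, inv_one, Units.val_one]
    rw [hχ1, one_smul, hf_one]
    have hid : (LinearMap.id : Module.End ℚ_[p] (ℚ_[p] ⊗[ℚ] L)) =
        LinearMap.baseChange ℚ_[p] (LinearMap.id : L →ₗ[ℚ] L) :=
      (LinearMap.baseChange_id).symm
    rw [hid, LinearMap.trace_baseChange, LinearMap.trace_id]
    rw [map_natCast, smul_eq_mul]
    have hLk : Module.finrank ℚ L = Module.finrank ℚ k * N := by
      rw [hN, ← Nat.card_eq_fintype_card, IsGalois.card_aut_eq_finrank, Module.finrank_mul_finrank]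
    rw [hLk]
    push_cast
    field_simp
  have hfin := hproj.trace
  rw [htrace] at hfin
  exact (Nat.cast_inj.mp hfin).symm
end
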